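/- The space ℂ[SL(2,ℂ)] of regular functions is completely reducible under the two-sided translation action of SL(2,ℂ) × SL(2,ℂ) given by ((g₁,g₂)·f)(x) = f(g₁⁻¹ x g₂): there exists a family (Wᵢ) of finite-dimensional subspaces of ℂ[SL(2,ℂ)], each invariant under this action and each having no invariant subspace other than 0 and itself, such that ℂ[SL(2,ℂ)] is the internal direct sum of the Wᵢ. -/

import Mathlib

open Matrix MvPolynomial

noncomputable section

abbrev SL2 : Type := Matrix.SpecialLinearGroup (Fin 2) ℂ

def IsRegularFn (f : SL2 → ℂ) : Prop :=
  ∃ P : MvPolynomial (Fin 4) ℂ,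
    ∀ A : SL2, f A = MvPolynomial.eval ![A.1 0 0, A.1 0 1, A.1 1 0, A.1 1 1] P

def RegFns : Submodule ℂ (SL2 → ℂ) where
  carrier := {f | IsRegularFn f}
  add_mem' := by
    rintro f g ⟨P, hP⟩ ⟨Q, hQ⟩
    exact ⟨P + Q, fun A => by simp [hP A, hQ A]⟩
  zero_mem' := ⟨0, fun A => by simp⟩
  smul_mem' := by
    rintro c f ⟨P, hP⟩
    exact ⟨c • P, fun A => by simp [hP A, MvPolynomial.smul_eval]⟩

def TranslationInvariant (U : Submodule ℂ (SL2 → ℂ)) : Prop :=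
  ∀ g₁ g₂ : SL2, ∀ f ∈ U, (fun x => f (g₁⁻¹ * x * g₂)) ∈ U

/-- exponent vector (a,b) for `X 0 ^ a * X 1 ^ b` -/
def dd (a b : ℕ) : Fin 2 →₀ ℕ := Finsupp.single 0 a + Finsupp.single 1 b

lemma dd_apply0 (a b : ℕ) : dd a b 0 = a := by simp [dd]
lemma dd_apply1 (a b : ℕ) : dd a b 1 = b := by simp [dd, Finsupp.single_apply]

lemma dd_inj {a b a' b' : ℕ} : dd a b = dd a' b' ↔ a = a' ∧ b = b' := by
  constructor
  · intro h
    exact ⟨by simpa [dd_apply0] using congrArg (fun f => f 0) h,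
      by simpa [dd_apply1] using congrArg (fun f => f 1) h⟩
  · rintro ⟨rfl, rfl⟩; rfl

lemma degree_fin2 (d : Fin 2 →₀ ℕ) : d.degree = d 0 + d 1 := by
  classical
  rw [Finsupp.degree_apply, Finset.sum_subset (Finset.subset_univ d.support)
    (fun i _ hi => Finsupp.notMem_support_iff.mp hi), Fin.sum_univ_two]

lemma eq_dd_of_fin2 (w : Fin 2 →₀ ℕ) : w = dd (w 0) (w 1) := by
  ext i
  fin_cases i
  · simp [dd_apply0]
  · simp [dd_apply1]

lemma dd_degree (a b : ℕ) : (dd a b).degree = a + b := by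
  rw [degree_fin2, dd_apply0, dd_apply1]

lemma monomial_dd (a b : ℕ) (c : ℂ) :
    (monomial (dd a b) c : MvPolynomial (Fin 2) ℂ) = C c * X 0 ^ a * X 1 ^ b := by
  rw [X_pow_eq_monomial, X_pow_eq_monomial, mul_assoc, monomial_mul, C_mul_monomial]
  simp [dd]

/-- substitution by matrix A -/
def sub2 (A : Matrix (Fin 2) (Fin 2) ℂ) :
    MvPolynomial (Fin 2) ℂ →ₐ[ℂ] MvPolynomial (Fin 2) ℂ :=
  aeval ![C (A 0 0) * X 0 + C (A 1 0) * X 1, C (A 0 1) * X 0 + C (A 1 1) * X 1]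

lemma sub2_X0 (A : Matrix (Fin 2) (Fin 2) ℂ) :
    sub2 A (X 0) = C (A 0 0) * X 0 + C (A 1 0) * X 1 := by simp [sub2]

lemma sub2_X1 (A : Matrix (Fin 2) (Fin 2) ℂ) :
    sub2 A (X 1) = C (A 0 1) * X 0 + C (A 1 1) * X 1 := by simp [sub2]

lemma sub2_comp (A B : Matrix (Fin 2) (Fin 2) ℂ) (f : MvPolynomial (Fin 2) ℂ) :
    sub2 A (sub2 B f) = sub2 (A * B) f := by
  have h : (sub2 A).comp (sub2 B) = sub2 (A * B) := by
    apply algHom_ext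
    intro i
    fin_cases i <;>
      · simp [sub2, Matrix.mul_apply, Fin.sum_univ_two, C_mul, map_add]
        ring
  exact congrFun (congrArg (fun g => g.toFun) h) f

/-- the matrix coefficient of Sym^n at (p,q) -/
def mc (n p q : ℕ) (A : SL2) : ℂ :=
  coeff (dd p (n - p)) (sub2 A.1 (X 0 ^ q * X 1 ^ (n - q)))

lemma sub2_homog (A : Matrix (Fin 2) (Fin 2) ℂ) {n : ℕ} (q : ℕ) (hq : q ≤ n) :
    (sub2 A (X 0 ^ q * X 1 ^ (n - q))).IsHomogeneous n := by
  have h0 : (sub2 A (X 0)).IsHomogeneous 1 := by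
    rw [sub2_X0]
    exact ((isHomogeneous_X ℂ (0 : Fin 2)).C_mul _).add ((isHomogeneous_X ℂ 1).C_mul _)
  have h1 : (sub2 A (X 1)).IsHomogeneous 1 := by
    rw [sub2_X1]
    exact ((isHomogeneous_X ℂ (0 : Fin 2)).C_mul _).add ((isHomogeneous_X ℂ 1).C_mul _)
  have h : sub2 A (X 0 ^ q * X 1 ^ (n - q)) = (sub2 A (X 0)) ^ q * (sub2 A (X 1)) ^ (n - q) := by
    rw [_root_.map_mul, map_pow, map_pow]
  rw [h]
  have := (h0.pow q).mul (h1.pow (n - q))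
  simpa [one_mul, Nat.add_sub_cancel' hq] using this

/-- decomposition of a homogeneous polynomial of degree n in two variables -/
lemma homog_decomp {P : MvPolynomial (Fin 2) ℂ} {n : ℕ} (hP : P.IsHomogeneous n) :
    P = ∑ r ∈ Finset.range (n + 1), monomial (dd r (n - r)) (coeff (dd r (n - r)) P) := by
  classical
  apply MvPolynomial.ext
  intro w
  rw [coeff_sum]
  by_cases hw : w.degree = n
  · have hsum : w 0 + w 1 = n := by rw [← hw, degree_fin2]
    have hw0 : w 0 ≤ n := by omega
    have hwd : w = dd (w 0) (n - w 0) := by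
      rw [show n - w 0 = w 1 by omega]; exact eq_dd_of_fin2 w
    rw [Finset.sum_eq_single (w 0)]
    · rw [coeff_monomial, if_pos hwd.symm, ← hwd]
    · intro r hr hne
      rw [coeff_monomial, if_neg]
      intro hc
      rw [hwd] at hc
      exact hne (dd_inj.mp hc).1
    · intro h
      exact absurd (Finset.mem_range.mpr (Nat.lt_succ_of_le hw0)) h
  · rw [hP.coeff_eq_zero hw, Finset.sum_eq_zero]
    intro r hr
    rw [coeff_monomial, if_neg]
    intro hc
    apply hw
    rw [← hc, dd_degree]
    have : r ≤ n := Nat.lt_succ_iff.mp (Finset.mem_range.mp hr)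
    omega


lemma dd_add (a b a' b' : ℕ) : dd a b + dd a' b' = dd (a + a') (b + b') := by
  simp only [dd, Finsupp.single_add]
  abel

lemma mc_mul (n p q : ℕ) (hq : q ≤ n) (A B : SL2) :
    mc n p q (A * B) = ∑ r ∈ Finset.range (n + 1), mc n p r A * mc n r q B := by
  have hAB : ((A * B : SL2) : Matrix (Fin 2) (Fin 2) ℂ) = A.1 * B.1 := rfl
  rw [mc, hAB, ← sub2_comp, homog_decomp (sub2_homog B.1 q hq), map_sum, coeff_sum]
  refine Finset.sum_congr rfl fun r hr => ?_
  rw [monomial_dd, _root_.map_mul, _root_.map_mul, map_pow, map_pow]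
  rw [show (sub2 A.1) (C (coeff (dd r (n-r)) (sub2 B.1 (X 0 ^ q * X 1 ^ (n-q))))) = C (mc n r q B) by
    simp [sub2, algebraMap_eq, mc]]
  rw [mul_assoc, coeff_C_mul, ← map_pow, ← map_pow, ← _root_.map_mul]
  rw [mul_comm]
  rfl

lemma linform_pow (a c : ℂ) (q : ℕ) :
    (C a * X 0 + C c * X 1 : MvPolynomial (Fin 2) ℂ) ^ q
      = ∑ k ∈ Finset.range (q + 1), monomial (dd k (q - k)) (a ^ k * c ^ (q - k) * (q.choose k : ℂ)) := by
  rw [add_pow]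
  refine Finset.sum_congr rfl fun k hk => ?_
  rw [mul_pow, mul_pow, ← C_pow, ← C_pow, X_pow_eq_monomial, X_pow_eq_monomial,
    C_mul_monomial, C_mul_monomial]
  rw [show ((q.choose k : ℕ) : MvPolynomial (Fin 2) ℂ) = C ((q.choose k : ℕ) : ℂ) by
    simp]
  rw [monomial_mul, mul_comm (monomial _ _) (C _), C_mul_monomial]
  congr 1
  ring

lemma mc_expand (n p q : ℕ) (hq : q ≤ n) (A : SL2) :
    mc n p q A = ∑ e1 ∈ Finset.range (q + 1), ∑ e2 ∈ Finset.range (n - q + 1),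
      if e1 + e2 = p then
        ((q.choose e1 * (n - q).choose e2 : ℕ) : ℂ) * (A.1 0 0) ^ e1 * (A.1 0 1) ^ e2
          * (A.1 1 0) ^ (q - e1) * (A.1 1 1) ^ (n - q - e2)
      else 0 := by
  rw [mc, _root_.map_mul, map_pow, map_pow, sub2_X0, sub2_X1, linform_pow, linform_pow,
    Finset.sum_mul_sum]
  rw [coeff_sum]
  refine Finset.sum_congr rfl fun e1 he1 => ?_
  rw [coeff_sum]
  refine Finset.sum_congr rfl fun e2 he2 => ?_
  rw [monomial_mul, dd_add, coeff_monomial]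
  have he1' : e1 ≤ q := Nat.lt_succ_iff.mp (Finset.mem_range.mp he1)
  have he2' : e2 ≤ n - q := Nat.lt_succ_iff.mp (Finset.mem_range.mp he2)
  have hcond : (dd (e1 + e2) (q - e1 + (n - q - e2)) = dd p (n - p)) ↔ e1 + e2 = p := by
    rw [dd_inj]
    constructor
    · rintro ⟨h, -⟩; exact h
    · intro h; exact ⟨h, by omega⟩
  rw [if_congr hcond rfl rfl]
  by_cases h : e1 + e2 = p
  · rw [if_pos h, if_pos h]
    push_cast
    ring
  · rw [if_neg h, if_neg h]
def tE (s : ℂ) (hs : s ≠ 0) : SL2 :=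
  ⟨!![s, 0; 0, s⁻¹], by rw [Matrix.det_fin_two_of]; simp [mul_inv_cancel₀ hs]⟩
def uE (x : ℂ) : SL2 := ⟨!![1, x; 0, 1], by rw [Matrix.det_fin_two_of]; simp⟩
def lE (y : ℂ) : SL2 := ⟨!![1, 0; y, 1], by rw [Matrix.det_fin_two_of]; simp⟩

lemma mc_t (n p q : ℕ) (s : ℂ) (hs : s ≠ 0) :
    mc n p q (tE s hs) = if q = p then s ^ q * (s⁻¹) ^ (n - q) else 0 := by
  rw [mc, _root_.map_mul, map_pow, map_pow, sub2_X0, sub2_X1]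
  have e0 : (tE s hs).1 0 0 = s := rfl
  have e1 : (tE s hs).1 0 1 = 0 := rfl
  have e2 : (tE s hs).1 1 0 = 0 := rfl
  have e3 : (tE s hs).1 1 1 = s⁻¹ := rfl
  rw [e0, e1, e2, e3]
  have h1 : (C s * X 0 + C (0:ℂ) * X 1 : MvPolynomial (Fin 2) ℂ) = C s * X 0 := by simp
  have h2 : (C (0:ℂ) * X 0 + C s⁻¹ * X 1 : MvPolynomial (Fin 2) ℂ) = C s⁻¹ * X 1 := by simp
  rw [h1, h2, mul_pow, mul_pow, ← C_pow, ← C_pow]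
  have : (C (s ^ q) * X 0 ^ q * (C (s⁻¹ ^ (n - q)) * X 1 ^ (n - q)) : MvPolynomial (Fin 2) ℂ)
      = monomial (dd q (n - q)) (s ^ q * s⁻¹ ^ (n - q)) := by
    rw [monomial_dd, C_mul]; ring
  rw [this, coeff_monomial]
  congr 1
  rw [eq_iff_iff, dd_inj]
  constructor
  · rintro ⟨h, -⟩; exact h
  · intro h; exact ⟨h, by rw [h]⟩

lemma mc_u (n p q : ℕ) (hq : q ≤ n) (x : ℂ) :
    mc n p q (uE x) = if q ≤ p ∧ p ≤ n then ((n - q).choose (p - q) : ℂ) * x ^ (p - q) else 0 := by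
  rw [mc_expand n p q hq]
  have e0 : (uE x).1 0 0 = 1 := rfl
  have e1 : (uE x).1 0 1 = x := rfl
  have e2 : (uE x).1 1 0 = 0 := rfl
  have e3 : (uE x).1 1 1 = 1 := rfl
  rw [Finset.sum_eq_single q]
  · rw [Finset.sum_eq_single (p - q)]
    · rw [e0, e1, e2, e3]
      by_cases h : q ≤ p ∧ p ≤ n
      · rw [if_pos (by omega : q + (p - q) = p), if_pos h]
        simp
      · by_cases hc : q + (p - q) = p
        · rw [if_pos hc, if_neg h]
          have hqp : q ≤ p := by omega
          have hpn : n < p := by omega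
          rw [Nat.choose_eq_zero_of_lt (by omega : n - q < p - q)]
          simp
        · rw [if_neg hc, if_neg h]
    · intro e2' he2' hne
      by_cases hc : q + e2' = p
      · exact absurd (by omega : e2' = p - q) hne
      · rw [if_neg hc]
    · intro hnm
      by_cases hc : q + (p - q) = p
      · rw [if_pos hc]
        have : n - q < p - q := by
          have := Nat.not_lt.mp (fun h => hnm (Finset.mem_range.mpr h))
          omega
        rw [Nat.choose_eq_zero_of_lt this]
        simp
      · rw [if_neg hc]
  · intro e1' he1' hne
    rw [Finset.sum_eq_zero]
    intro e2' _
    by_cases hc : e1' + e2' = p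
    · rw [if_pos hc, e2, zero_pow (by
        have := Finset.mem_range.mp he1'
        omega : q - e1' ≠ 0)]
      ring
    · rw [if_neg hc]
  · intro h
    exact absurd (Finset.mem_range.mpr (Nat.lt_succ_self q)) h

lemma mc_l (n p q : ℕ) (hq : q ≤ n) (y : ℂ) :
    mc n p q (lE y) = if p ≤ q then (q.choose p : ℂ) * y ^ (q - p) else 0 := by
  rw [mc_expand n p q hq]
  have e0 : (lE y).1 0 0 = 1 := rfl
  have e1 : (lE y).1 0 1 = 0 := rfl
  have e2 : (lE y).1 1 0 = y := rfl
  have e3 : (lE y).1 1 1 = 1 := rfl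
  rw [Finset.sum_eq_single p]
  · rw [Finset.sum_eq_single 0]
    · rw [e0, e1, e2, e3]
      by_cases h : p ≤ q
      · rw [if_pos (by omega : p + 0 = p), if_pos h]
        simp
      · rw [if_pos (by omega : p + 0 = p), if_neg h]
        rw [Nat.choose_eq_zero_of_lt (by omega : q < p)]
        simp
    · intro e2' he2' hne
      by_cases hc : p + e2' = p
      · exact absurd (by omega : e2' = 0) hne
      · rw [if_neg hc]
    · intro hnm
      exact absurd (Finset.mem_range.mpr (by omega)) hnm
  · intro e1' he1' hne
    rw [Finset.sum_eq_zero]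
    intro e2' _
    by_cases hc : e1' + e2' = p
    · have hlt : e1' < p ∨ p < e1' := lt_or_gt_of_ne hne
      rcases hlt with h | h
      · -- e1' < p : then e2' = p - e1' > 0 and factor x^? no zero... need e1 entry: (lE).0 1 = 0, exponent e2'
        rw [if_pos hc, e1, zero_pow (by omega : e2' ≠ 0)]
        ring
      · -- p < e1' : then e1' + e2' = p impossible
        omega
    · rw [if_neg hc]
  · intro h
    -- p ∉ range (q+1): then p > q; every term must vanish
    rw [Finset.sum_eq_zero]
    intro e2' he2'
    by_cases hc : p + e2' = p
    · have he2'0 : e2' = 0 := by omega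
      subst he2'0
      -- value: choose q p with p > q: zero
      rw [if_pos hc, Nat.choose_eq_zero_of_lt (by
        have := Nat.not_lt.mp (fun h' => h (Finset.mem_range.mpr h'))
        omega : q < p)]
      simp
    · rw [if_neg hc]

/-- the matrix coefficient as an element of the function space -/
def mcFn (n p q : ℕ) : SL2 → ℂ := fun A => mc n p q A

/-- translation operator -/
def trL (g₁ g₂ : SL2) : (SL2 → ℂ) →ₗ[ℂ] (SL2 → ℂ) where
  toFun f := fun x => f (g₁ * x * g₂)
  map_add' f g := rfl
  map_smul' c f := rfl

lemma trL_apply (g₁ g₂ : SL2) (f : SL2 → ℂ) (x : SL2) : trL g₁ g₂ f x = f (g₁ * x * g₂) := rfl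

lemma mc_eigen (n p q : ℕ) (hp : p ≤ n) (hq : q ≤ n) (a b : ℂ) (ha : a ≠ 0) (hb : b ≠ 0)
    (x : SL2) :
    mc n p q (tE a ha * x * tE b hb)
      = ((a ^ p * a⁻¹ ^ (n - p)) * (b ^ q * b⁻¹ ^ (n - q))) * mc n p q x := by
  rw [mc_mul n p q hq _ (tE b hb), Finset.sum_eq_single q]
  · rw [mc_t, if_pos rfl, mc_mul n p q hq (tE a ha) x, Finset.sum_eq_single p]
    · rw [mc_t, if_pos rfl]; ring
    · intro r hr hne
      rw [mc_t, if_neg hne, zero_mul]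
    · intro h; exact absurd (Finset.mem_range.mpr (by omega)) h
  · intro r hr hne
    rw [mc_t, if_neg (fun h => hne h.symm), mul_zero]
  · intro h; exact absurd (Finset.mem_range.mpr (by omega)) h

/-- extraction of eigencomponents from an invariant subspace -/
lemma extract {ι : Type} (U : Submodule ℂ (SL2 → ℂ)) (D : (SL2 → ℂ) →ₗ[ℂ] (SL2 → ℂ))
    (hU : ∀ v ∈ U, D v ∈ U) (c : ι → ℂ) :
    ∀ s : Finset ι, Set.InjOn c s → ∀ v : ι → (SL2 → ℂ),
      (∀ i ∈ s, D (v i) = c i • v i) → (∑ i ∈ s, v i) ∈ U → ∀ i ∈ s, v i ∈ U := by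
  classical
  intro s
  induction s using Finset.induction_on with
  | empty => intro _ v _ _ i hi; exact absurd hi (Finset.notMem_empty i)
  | @insert a s' ha ih =>
    intro hinj v hv hsum i hi
    have key : (∑ j ∈ s', (c j - c a) • v j) ∈ U := by
      have h1 : (∑ j ∈ insert a s', (c j - c a) • v j) ∈ U := by
        have heq : (∑ j ∈ insert a s', (c j - c a) • v j)
            = D (∑ j ∈ insert a s', v j) - c a • (∑ j ∈ insert a s', v j) := by
          rw [map_sum, Finset.smul_sum, ← Finset.sum_sub_distrib]
          exact Finset.sum_congr rfl fun j hj => by rw [hv j hj, sub_smul]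
        rw [heq]
        exact sub_mem (hU _ hsum) (Submodule.smul_mem _ _ hsum)
      rwa [Finset.sum_insert ha, sub_self, zero_smul, zero_add] at h1
    have hmem : ∀ j ∈ s', v j ∈ U := by
      intro j hj
      have hja : j ≠ a := fun h => ha (h ▸ hj)
      have hne : c j - c a ≠ 0 := sub_ne_zero.mpr (fun h => hja
        (hinj (Finset.mem_coe.mpr (Finset.mem_insert_of_mem hj))
          (Finset.mem_coe.mpr (Finset.mem_insert_self a s')) h))
      have h3 := ih (hinj.mono (fun x hx => Finset.mem_coe.mpr
          (Finset.mem_insert_of_mem (Finset.mem_coe.mp hx))))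
        (fun j => (c j - c a) • v j)
        (fun j hj => by
          show D ((c j - c a) • v j) = c j • ((c j - c a) • v j)
          rw [LinearMap.map_smul, hv j (Finset.mem_insert_of_mem hj), smul_smul, smul_smul,
            mul_comm]) key j hj
      have h2 := Submodule.smul_mem U (c j - c a)⁻¹ h3
      rwa [smul_smul, inv_mul_cancel₀ hne, one_smul] at h2
    rcases Finset.mem_insert.mp hi with h | h
    · subst h
      have heq : v i = (∑ j ∈ insert i s', v j) - ∑ j ∈ s', v j := by
        rw [Finset.sum_insert ha]; abel
      rw [heq]
      exact sub_mem hsum (Submodule.sum_mem _ fun j hj => hmem j hj)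
    · exact hmem i h

/-- monomial functions -/
def monoFn (i j k l : ℕ) : SL2 → ℂ :=
  fun A => A.1 0 0 ^ i * A.1 0 1 ^ j * A.1 1 0 ^ k * A.1 1 1 ^ l

lemma monoFn_regular (i j k l : ℕ) : monoFn i j k l ∈ RegFns := by
  refine ⟨X 0 ^ i * X 1 ^ j * X 2 ^ k * X 3 ^ l, fun A => ?_⟩
  simp [monoFn]

lemma mcFn_eq_sum (n p q : ℕ) (hq : q ≤ n) :
    mcFn n p q = ∑ e1 ∈ Finset.range (q + 1), ∑ e2 ∈ Finset.range (n - q + 1),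
      if e1 + e2 = p then
        ((q.choose e1 * (n - q).choose e2 : ℕ) : ℂ) • monoFn e1 e2 (q - e1) (n - q - e2)
      else 0 := by
  funext A
  rw [mcFn, mc_expand n p q hq A]
  rw [Finset.sum_apply]
  refine Finset.sum_congr rfl fun e1 _ => ?_
  rw [Finset.sum_apply]
  refine Finset.sum_congr rfl fun e2 _ => ?_
  by_cases h : e1 + e2 = p
  · rw [if_pos h, if_pos h, Pi.smul_apply, monoFn, smul_eq_mul]
    ring
  · rw [if_neg h, if_neg h, Pi.zero_apply]

lemma mcFn_regular (n p q : ℕ) (hq : q ≤ n) : mcFn n p q ∈ RegFns := by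
  rw [mcFn_eq_sum n p q hq]
  refine Submodule.sum_mem _ fun e1 _ => Submodule.sum_mem _ fun e2 _ => ?_
  by_cases h : e1 + e2 = p
  · rw [if_pos h]
    exact Submodule.smul_mem _ _ (monoFn_regular _ _ _ _)
  · rw [if_neg h]
    exact Submodule.zero_mem _

/-- the irreducible pieces -/
def Wn (n : ℕ) : Submodule ℂ (SL2 → ℂ) :=
  Submodule.span ℂ (Set.range fun pq : Fin (n + 1) × Fin (n + 1) => mcFn n pq.1 pq.2)

lemma mcFn_mem_W {n p q : ℕ} (hp : p ≤ n) (hq : q ≤ n) : mcFn n p q ∈ Wn n :=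
  Submodule.subset_span ⟨(⟨p, by omega⟩, ⟨q, by omega⟩), rfl⟩

lemma W_le_RegFns (n : ℕ) : Wn n ≤ RegFns := by
  rw [Wn, Submodule.span_le]
  rintro f ⟨pq, rfl⟩
  exact mcFn_regular n pq.1 pq.2 (Nat.lt_succ_iff.mp pq.2.2)

lemma W_findim (n : ℕ) : FiniteDimensional ℂ (Wn n) :=
  FiniteDimensional.span_of_finite ℂ (Set.finite_range _)

lemma mc_translate (n p q : ℕ) (hq : q ≤ n) (g₁ g₂ : SL2) :
    trL g₁ g₂ (mcFn n p q) = ∑ r ∈ Finset.range (n + 1), ∑ t ∈ Finset.range (n + 1),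
      (mc n p r g₁ * mc n t q g₂) • mcFn n r t := by
  funext x
  show mc n p q (g₁ * x * g₂) = _
  simp only [Finset.sum_apply, Pi.smul_apply, smul_eq_mul, mcFn]
  rw [mc_mul n p q hq _ g₂]
  have L : ∀ t ∈ Finset.range (n + 1), mc n p t (g₁ * x) * mc n t q g₂
      = ∑ r ∈ Finset.range (n + 1), mc n p r g₁ * mc n t q g₂ * mc n r t x := by
    intro t ht
    rw [mc_mul n p t (Nat.lt_succ_iff.mp (Finset.mem_range.mp ht)) g₁ x, Finset.sum_mul]
    exact Finset.sum_congr rfl fun r _ => by ring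
  rw [Finset.sum_congr rfl L, Finset.sum_comm]

lemma W_invariant (n : ℕ) : TranslationInvariant (Wn n) := by
  intro g₁ g₂ f hf
  have : trL g₁⁻¹ g₂ f ∈ Wn n := by
    refine Submodule.span_induction ?_ ?_ ?_ ?_ hf
    · rintro f ⟨pq, rfl⟩
      rw [mc_translate n pq.1 pq.2 (Nat.lt_succ_iff.mp pq.2.2) g₁⁻¹ g₂]
      refine Submodule.sum_mem _ fun r hr => Submodule.sum_mem _ fun t ht => ?_
      exact Submodule.smul_mem _ _ (mcFn_mem_W (Nat.lt_succ_iff.mp (Finset.mem_range.mp hr))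
        (Nat.lt_succ_iff.mp (Finset.mem_range.mp ht)))
    · rw [map_zero]; exact Submodule.zero_mem _
    · intro a b _ _ ha hb; rw [map_add]; exact Submodule.add_mem _ ha hb
    · intro a x _ hx; rw [LinearMap.map_smul]; exact Submodule.smul_mem _ _ hx
  exact this

-- ## Irreducibility machinery

/-- the eigenvalue of the torus translation operator -/
def evC (n p q : ℕ) : ℂ :=
  ((2:ℂ) ^ p * ((2:ℂ)⁻¹) ^ (n - p)) * (((2:ℂ) ^ (2*n+1)) ^ q * (((2:ℂ) ^ (2*n+1))⁻¹) ^ (n - q))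

lemma two_ne : (2:ℂ) ≠ 0 := by norm_num
lemma twoB_ne (n : ℕ) : ((2:ℂ) ^ (2*n+1)) ≠ 0 := pow_ne_zero _ two_ne

lemma aux_pow (c : ℂ) (hc : c ≠ 0) {p n : ℕ} (hp : p ≤ n) :
    c ^ p * (c⁻¹) ^ (n - p) * c ^ n = c ^ (2 * p) := by
  have h1 : (c⁻¹) ^ (n - p) * c ^ n = c ^ p := by
    have h2 : c ^ n / c ^ (n - p) = c ^ (n - (n - p)) := (pow_sub₀ c hc (Nat.sub_le n p)).symm
    rw [inv_pow, mul_comm, ← div_eq_mul_inv, h2, show n - (n - p) = p by omega]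
  rw [mul_assoc, h1, ← pow_add, two_mul]

/-- the torus translation operator -/
def DT (n : ℕ) : (SL2 → ℂ) →ₗ[ℂ] (SL2 → ℂ) :=
  trL (tE 2 two_ne) (tE ((2:ℂ) ^ (2*n+1)) (twoB_ne n))

lemma DT_mcFn (n p q : ℕ) (hp : p ≤ n) (hq : q ≤ n) :
    DT n (mcFn n p q) = evC n p q • mcFn n p q := by
  funext x
  rw [DT, trL_apply]
  show mc n p q _ = _
  rw [mc_eigen n p q hp hq _ _ two_ne (twoB_ne n) x]
  rfl

lemma evC_inj (n : ℕ) {p q p' q' : ℕ} (hp : p ≤ n) (hq : q ≤ n) (hp' : p' ≤ n) (hq' : q' ≤ n)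
    (h : evC n p q = evC n p' q') : p = p' ∧ q = q' := by
  set b : ℂ := (2:ℂ) ^ (2*n+1) with hb
  have e : ∀ p q : ℕ, p ≤ n → q ≤ n →
      evC n p q * ((2:ℂ) ^ n * b ^ n) = (2:ℂ) ^ (2*p + (2*n+1)*(2*q)) := by
    intro p q hp hq
    have h1 : evC n p q * ((2:ℂ) ^ n * b ^ n)
        = ((2:ℂ) ^ p * ((2:ℂ)⁻¹) ^ (n - p) * (2:ℂ) ^ n) * (b ^ q * (b⁻¹) ^ (n - q) * b ^ n) := by
      rw [evC]; ring
    rw [h1, aux_pow (2:ℂ) two_ne hp, aux_pow b (twoB_ne n) hq, hb, ← pow_mul, ← pow_add]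
  have key : (2:ℂ) ^ (2*p + (2*n+1)*(2*q)) = (2:ℂ) ^ (2*p' + (2*n+1)*(2*q')) := by
    rw [← e p q hp hq, ← e p' q' hp' hq', h]
  have keyN : (2:ℕ) ^ (2*p + (2*n+1)*(2*q)) = (2:ℕ) ^ (2*p' + (2*n+1)*(2*q')) := by
    have : ((2 ^ (2*p + (2*n+1)*(2*q)) : ℕ) : ℂ) = ((2 ^ (2*p' + (2*n+1)*(2*q')) : ℕ) : ℂ) := by
      push_cast
      exact key
    exact_mod_cast this
  have hE := Nat.pow_right_injective (le_refl 2) keyN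
  have main : ∀ a b a' b' : ℕ, a ≤ n → a' ≤ n → b < b' →
      2*a + (2*n+1)*(2*b) ≠ 2*a' + (2*n+1)*(2*b') := by
    intro a b a' b' ha ha' hbb heq
    have h1 : (2*n+1)*(2*b+2) ≤ (2*n+1)*(2*b') :=
      Nat.mul_le_mul_left (2*n+1) (by omega : 2*b+2 ≤ 2*b')
    have h2 : (2*n+1)*(2*b+2) = (2*n+1)*(2*b) + (4*n+2) := by ring
    linarith
  have hq2 : q = q' := by
    rcases lt_trichotomy q q' with hlt | heq | hgt
    · exact absurd hE (main p q p' q' hp hp' hlt)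
    · exact heq
    · exact absurd hE.symm (main p' q' p q hp' hp hgt)
  subst hq2
  have h6 : 2*p = 2*p' := by linarith
  exact ⟨by omega, rfl⟩

lemma trL_mem {U : Submodule ℂ (SL2 → ℂ)} (hinv : TranslationInvariant U) (g₁ g₂ : SL2) :
    ∀ v ∈ U, trL g₁ g₂ v ∈ U := by
  intro v hv
  have h := hinv g₁⁻¹ g₂ v hv
  simp only [inv_inv] at h
  exact h

lemma right_decomp (n p q : ℕ) (hq : q ≤ n) (g : SL2) :
    trL 1 g (mcFn n p q) = ∑ r ∈ Finset.range (n+1), mc n r q g • mcFn n p r := by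
  funext x
  show mc n p q (1 * x * g) = _
  rw [one_mul, mc_mul n p q hq x g]
  simp only [Finset.sum_apply, Pi.smul_apply, smul_eq_mul, mcFn]
  exact Finset.sum_congr rfl fun r _ => mul_comm _ _

lemma left_decomp (n p q : ℕ) (hq : q ≤ n) (g : SL2) :
    trL g 1 (mcFn n p q) = ∑ r ∈ Finset.range (n+1), mc n p r g • mcFn n r q := by
  funext x
  show mc n p q (g * x * 1) = _
  rw [mul_one, mc_mul n p q hq g x]
  simp only [Finset.sum_apply, Pi.smul_apply, smul_eq_mul, mcFn]

lemma smul_mem_inv {U : Submodule ℂ (SL2 → ℂ)} {c : ℂ} (hc : c ≠ 0) {f : SL2 → ℂ}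
    (h : c • f ∈ U) : f ∈ U := by
  have h2 := Submodule.smul_mem U c⁻¹ h
  rwa [smul_smul, inv_mul_cancel₀ hc, one_smul] at h2

lemma step_right {n : ℕ} {U : Submodule ℂ (SL2 → ℂ)} (hinv : TranslationInvariant U)
    {p q : ℕ} (hp : p ≤ n) (hq : q ≤ n) (hm : mcFn n p q ∈ U) (g : SL2) (r : ℕ) (hr : r ≤ n)
    (hcoef : mc n r q g ≠ 0) : mcFn n p r ∈ U := by
  have h1 : (∑ r' ∈ Finset.range (n+1), mc n r' q g • mcFn n p r') ∈ U := by
    rw [← right_decomp n p q hq g]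
    exact trL_mem hinv 1 g _ hm
  have h2 := extract U (DT n) (trL_mem hinv _ _) (fun r' => evC n p r') (Finset.range (n+1))
    (fun a ha b hb hab => (evC_inj n hp
      (Nat.lt_succ_iff.mp (Finset.mem_range.mp (Finset.mem_coe.mp ha))) hp
      (Nat.lt_succ_iff.mp (Finset.mem_range.mp (Finset.mem_coe.mp hb))) hab).2)
    (fun r' => mc n r' q g • mcFn n p r')
    (fun r' hr' => by
      rw [LinearMap.map_smul, DT_mcFn n p r' hp (Nat.lt_succ_iff.mp (Finset.mem_range.mp hr')),
        smul_comm])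
    h1 r (Finset.mem_range.mpr (by omega))
  exact smul_mem_inv hcoef h2

lemma step_left {n : ℕ} {U : Submodule ℂ (SL2 → ℂ)} (hinv : TranslationInvariant U)
    {p q : ℕ} (hp : p ≤ n) (hq : q ≤ n) (hm : mcFn n p q ∈ U) (g : SL2) (r : ℕ) (hr : r ≤ n)
    (hcoef : mc n p r g ≠ 0) : mcFn n r q ∈ U := by
  have h1 : (∑ r' ∈ Finset.range (n+1), mc n p r' g • mcFn n r' q) ∈ U := by
    rw [← left_decomp n p q hq g]
    exact trL_mem hinv g 1 _ hm
  have h2 := extract U (DT n) (trL_mem hinv _ _) (fun r' => evC n r' q) (Finset.range (n+1))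
    (fun a ha b hb hab => (evC_inj n
      (Nat.lt_succ_iff.mp (Finset.mem_range.mp (Finset.mem_coe.mp ha))) hq
      (Nat.lt_succ_iff.mp (Finset.mem_range.mp (Finset.mem_coe.mp hb))) hq hab).1)
    (fun r' => mc n p r' g • mcFn n r' q)
    (fun r' hr' => by
      rw [LinearMap.map_smul, DT_mcFn n r' q (Nat.lt_succ_iff.mp (Finset.mem_range.mp hr')) hq,
        smul_comm])
    h1 r (Finset.mem_range.mpr (by omega))
  exact smul_mem_inv hcoef h2

lemma choose_cast_ne {a b : ℕ} (h : b ≤ a) : ((a.choose b : ℕ) : ℂ) ≠ 0 :=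
  Nat.cast_ne_zero.mpr (Nat.choose_pos h).ne'

lemma W_irred (n : ℕ) (U : Submodule ℂ (SL2 → ℂ)) (hle : U ≤ Wn n)
    (hinv : TranslationInvariant U) : U = ⊥ ∨ U = Wn n := by
  by_cases hbot : U = ⊥
  · exact Or.inl hbot
  right
  obtain ⟨f, hfU, hf0⟩ := (Submodule.ne_bot_iff U).mp hbot
  obtain ⟨γ, hγ⟩ := (Submodule.mem_span_range_iff_exists_fun ℂ).mp (hle hfU)
  have hcomp := extract U (DT n) (trL_mem hinv _ _)
    (fun i : Fin (n+1) × Fin (n+1) => evC n i.1 i.2) Finset.univ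
    (fun a _ b _ hab => by
      have h := evC_inj n (Nat.lt_succ_iff.mp a.1.2) (Nat.lt_succ_iff.mp a.2.2)
        (Nat.lt_succ_iff.mp b.1.2) (Nat.lt_succ_iff.mp b.2.2) hab
      exact Prod.ext (Fin.ext h.1) (Fin.ext h.2))
    (fun i => γ i • mcFn n i.1 i.2)
    (fun i _ => by
      rw [LinearMap.map_smul, DT_mcFn n i.1 i.2 (Nat.lt_succ_iff.mp i.1.2)
        (Nat.lt_succ_iff.mp i.2.2), smul_comm])
    (by rw [hγ]; exact hfU)
  have hex : ∃ i : Fin (n+1) × Fin (n+1), γ i • mcFn n i.1 i.2 ≠ 0 := by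
    by_contra hall
    push_neg at hall
    exact hf0 (by rw [← hγ]; exact Finset.sum_eq_zero fun i _ => hall i)
  obtain ⟨i₀, hne⟩ := hex
  have hγ0 : γ i₀ ≠ 0 := fun h => hne (by rw [h, zero_smul])
  have hm0 : mcFn n i₀.1 i₀.2 ∈ U :=
    smul_mem_inv hγ0 (hcomp i₀ (Finset.mem_univ i₀))
  have hp0 : (i₀.1 : ℕ) ≤ n := Nat.lt_succ_iff.mp i₀.1.2
  have hq0 : (i₀.2 : ℕ) ≤ n := Nat.lt_succ_iff.mp i₀.2.2
  -- move the column index to n, then anywhere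
  have hcol : ∀ t ≤ n, mcFn n i₀.1 t ∈ U := by
    intro t ht
    have h1 : mcFn n i₀.1 n ∈ U := by
      refine step_right hinv hp0 hq0 hm0 (uE 1) n le_rfl ?_
      rw [mc_u n n i₀.2 hq0 1, if_pos ⟨hq0, le_rfl⟩, one_pow, mul_one]
      exact choose_cast_ne (by omega)
    refine step_right hinv hp0 le_rfl h1 (lE 1) t ht ?_
    rw [mc_l n t n le_rfl 1, if_pos ht, one_pow, mul_one]
    exact choose_cast_ne ht
  have hall : ∀ r ≤ n, ∀ t ≤ n, mcFn n r t ∈ U := by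
    intro r hr t ht
    have h2 : mcFn n n t ∈ U := by
      refine step_left hinv hp0 ht (hcol t ht) (lE 1) n le_rfl ?_
      rw [mc_l n i₀.1 n le_rfl 1, if_pos hp0, one_pow, mul_one]
      exact choose_cast_ne hp0
    refine step_left hinv le_rfl ht h2 (uE 1) r hr ?_
    rw [mc_u n n r hr 1, if_pos ⟨hr, le_rfl⟩, one_pow, mul_one]
    exact choose_cast_ne (by omega)
  refine le_antisymm hle ?_
  rw [Wn, Submodule.span_le]
  rintro f ⟨pq, rfl⟩
  exact hall pq.1 (Nat.lt_succ_iff.mp pq.1.2) pq.2 (Nat.lt_succ_iff.mp pq.2.2)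

-- ## Spanning

lemma det_rel (A : SL2) : A.1 0 0 * A.1 1 1 = A.1 0 1 * A.1 1 0 + 1 := by
  have h := A.2
  rw [Matrix.det_fin_two] at h
  linear_combination h

lemma mono_rel (i j k l : ℕ) :
    monoFn (i+1) j k (l+1) = monoFn i (j+1) (k+1) l + monoFn i j k l := by
  funext A
  simp only [monoFn, Pi.add_apply]
  have h := det_rel A
  have h2 : A.1 0 0 ^ (i+1) * A.1 0 1 ^ j * A.1 1 0 ^ k * A.1 1 1 ^ (l+1)
      = (A.1 0 0 * A.1 1 1) * (A.1 0 0 ^ i * A.1 0 1 ^ j * A.1 1 0 ^ k * A.1 1 1 ^ l) := by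
    ring
  rw [h2, h]
  ring

lemma monoFn_mem_iSup : ∀ N : ℕ, ∀ i j k l : ℕ, i+j+k+l = N → monoFn i j k l ∈ ⨆ m, Wn m := by
  intro N
  induction N using Nat.strong_induction_on with
  | _ N IH =>
  have lad : ∀ i j k l t : ℕ, i+j+k+l = N → t ≤ j → t ≤ k →
      monoFn (i+t) (j-t) (k-t) (l+t) - monoFn i j k l ∈ ⨆ m, Wn m := by
    intro i j k l t hN
    induction t with
    | zero => intro _ _; simpa using Submodule.zero_mem _
    | succ t iht =>
      intro htj htk
      have h1 : monoFn (i+t+1) (j-t-1) (k-t-1) (l+t+1)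
          = monoFn (i+t) (j-t) (k-t) (l+t) + monoFn (i+t) (j-t-1) (k-t-1) (l+t) := by
        have h := mono_rel (i+t) (j-t-1) (k-t-1) (l+t)
        rw [show j-t-1+1 = j-t by omega, show k-t-1+1 = k-t by omega] at h
        exact h
      rw [show i+(t+1) = i+t+1 by omega, show j-(t+1) = j-t-1 by omega,
        show k-(t+1) = k-t-1 by omega, show l+(t+1) = l+t+1 by omega, h1]
      have hmid : monoFn (i+t) (j-t-1) (k-t-1) (l+t) ∈ ⨆ m, Wn m :=
        IH (N-2) (by omega) _ _ _ _ (by omega)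
      have hrec := iht (by omega) (by omega)
      have hsum : monoFn (i+t) (j-t) (k-t) (l+t) + monoFn (i+t) (j-t-1) (k-t-1) (l+t)
            - monoFn i j k l
          = (monoFn (i+t) (j-t) (k-t) (l+t) - monoFn i j k l)
            + monoFn (i+t) (j-t-1) (k-t-1) (l+t) := by abel
      rw [hsum]
      exact Submodule.add_mem _ hrec hmid
  have base : ∀ i j k l : ℕ, i+j+k+l = N → (i = 0 ∨ l = 0) → monoFn i j k l ∈ ⨆ m, Wn m := by
    intro i j k l hN h0
    have hq : i + k ≤ N := by omega
    have hmc : mcFn N (i+j) (i+k) ∈ ⨆ m, Wn m :=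
      le_iSup Wn N (mcFn_mem_W (by omega) (by omega))
    have hexp := mcFn_eq_sum N (i+j) (i+k) hq
    set SN : ℕ := ∑ e1 ∈ Finset.range (i+k+1), ∑ e2 ∈ Finset.range (N-(i+k)+1),
      if e1 + e2 = i+j then (i+k).choose e1 * (N-(i+k)).choose e2 else 0 with hSN
    have hdiff : mcFn N (i+j) (i+k) - (SN : ℂ) • monoFn i j k l ∈ ⨆ m, Wn m := by
      rw [hexp, hSN]
      push_cast
      rw [Finset.sum_smul, ← Finset.sum_sub_distrib]
      refine Submodule.sum_mem _ fun e1 he1 => ?_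
      rw [Finset.sum_smul, ← Finset.sum_sub_distrib]
      refine Submodule.sum_mem _ fun e2 he2 => ?_
      have he1' : e1 ≤ i+k := Nat.lt_succ_iff.mp (Finset.mem_range.mp he1)
      have he2' : e2 ≤ N-(i+k) := Nat.lt_succ_iff.mp (Finset.mem_range.mp he2)
      by_cases hc : e1 + e2 = i+j
      · rw [if_pos hc, if_pos hc, ← smul_sub]
        refine Submodule.smul_mem _ _ ?_
        have harg : e1 = i + (e1 - i) ∧ e2 = j - (e1 - i) ∧ i+k - e1 = k - (e1 - i)
            ∧ N-(i+k) - e2 = l + (e1 - i) := by omega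
        rw [show monoFn e1 e2 (i+k-e1) (N-(i+k)-e2)
            = monoFn (i+(e1-i)) (j-(e1-i)) (k-(e1-i)) (l+(e1-i)) by
          rw [← harg.1, ← harg.2.1, ← harg.2.2.1, ← harg.2.2.2]]
        exact lad i j k l (e1-i) hN (by omega) (by omega)
      · rw [if_neg hc, if_neg hc]
        simpa using Submodule.zero_mem _
    have hSNpos : 0 < SN := by
      rw [hSN]
      refine Finset.sum_pos' (fun e1 _ => Finset.sum_nonneg fun e2 _ => by positivity)
        ⟨i, Finset.mem_range.mpr (by omega), ?_⟩
      refine Finset.sum_pos' (fun e2 _ => by positivity)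
        ⟨j, Finset.mem_range.mpr (by omega), ?_⟩
      rw [if_pos rfl]
      exact Nat.mul_pos (Nat.choose_pos (by omega)) (Nat.choose_pos (by omega))
    have hS0 : (SN : ℂ) ≠ 0 := Nat.cast_ne_zero.mpr hSNpos.ne'
    have hsmul : (SN : ℂ) • monoFn i j k l ∈ ⨆ m, Wn m := by
      have := Submodule.sub_mem _ hmc hdiff
      simpa using this
    exact smul_mem_inv hS0 hsmul
  have A : ∀ l i j k : ℕ, i+j+k+l = N → monoFn i j k l ∈ ⨆ m, Wn m := by
    intro l
    induction l with
    | zero => intro i j k hN; exact base i j k 0 hN (Or.inr rfl)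
    | succ l ihl =>
      intro i j k hN
      rcases Nat.eq_zero_or_pos i with h0 | hpos
      · exact base i j k (l+1) hN (Or.inl h0)
      · have h1 : monoFn i j k (l+1) = monoFn (i-1) (j+1) (k+1) l + monoFn (i-1) j k l := by
          have h := mono_rel (i-1) j k l
          rw [show i-1+1 = i by omega] at h
          exact h
        rw [h1]
        exact Submodule.add_mem _ (ihl (i-1) (j+1) (k+1) (by omega))
          (IH (N-2) (by omega) (i-1) j k l (by omega))
  exact fun i j k l hN => A l i j k hN

lemma reg_le_iSup : RegFns ≤ ⨆ m, Wn m := by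
  intro f hf
  obtain ⟨P, hP⟩ := hf
  have hfeq : f = ∑ w ∈ P.support, coeff w P • monoFn (w 0) (w 1) (w 2) (w 3) := by
    funext A
    rw [hP A, eval_eq', Finset.sum_apply]
    refine Finset.sum_congr rfl fun w _ => ?_
    rw [Pi.smul_apply, smul_eq_mul]
    congr 1
    rw [Fin.prod_univ_four]
    simp [monoFn]
  rw [hfeq]
  exact Submodule.sum_mem _ fun w _ => Submodule.smul_mem _ _
    (monoFn_mem_iSup (w 0 + w 1 + w 2 + w 3) (w 0) (w 1) (w 2) (w 3) rfl)

lemma iSup_W_eq : (⨆ m, Wn m) = RegFns :=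
  le_antisymm (iSup_le W_le_RegFns) reg_le_iSup

-- ## Linear independence

lemma mc_ul (n p q : ℕ) (hq : q ≤ n) (x y : ℂ) :
    mc n p q (uE x * lE y) = ∑ r ∈ Finset.range (n+1),
      (if r ≤ p ∧ p ≤ n then ((n-r).choose (p-r) : ℂ) * x^(p-r) else 0)
        * (if r ≤ q then (q.choose r : ℂ) * y^(q-r) else 0) := by
  rw [mc_mul n p q hq]
  refine Finset.sum_congr rfl fun r hr => ?_
  have hrn : r ≤ n := Nat.lt_succ_iff.mp (Finset.mem_range.mp hr)
  rw [mc_u n p r hrn x, mc_l n r q hq y]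

/-- index type of the full family of matrix coefficients -/
def Idx : Type := {v : ℕ × ℕ × ℕ // v.2.1 ≤ v.1 ∧ v.2.2 ≤ v.1}

def nn (t : Idx) : ℕ := t.1.1
def pp (t : Idx) : ℕ := t.1.2.1
def qq (t : Idx) : ℕ := t.1.2.2
lemma pp_le (t : Idx) : pp t ≤ nn t := t.2.1
lemma qq_le (t : Idx) : qq t ≤ nn t := t.2.2

def vFam (t : Idx) : SL2 → ℂ := mcFn (nn t) (pp t) (qq t)

def wtf (t : Idx) : ℤ × ℤ := (2*(pp t : ℤ) - nn t, 2*(qq t : ℤ) - nn t)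

lemma Idx_ext {t t' : Idx} (h1 : nn t = nn t') (h2 : pp t = pp t') (h3 : qq t = qq t') :
    t = t' := by
  apply Subtype.ext
  exact Prod.ext h1 (Prod.ext h2 h3)

lemma pow_inv_zpow (a : ℂ) (ha : a ≠ 0) {p n : ℕ} (hp : p ≤ n) :
    a^p * a⁻¹^(n-p) = a^((2*p : ℤ) - n) := by
  rw [inv_pow, ← zpow_natCast a p, ← zpow_natCast a (n-p), ← _root_.zpow_neg, ← zpow_add₀ ha]
  congr 1
  push_cast [hp]
  omega

lemma two_zpow_inj {z w : ℤ} (h : (2:ℂ)^z = (2:ℂ)^w) : z = w := by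
  have key : ∀ d : ℤ, (2:ℂ)^d = 1 → d = 0 := by
    intro d hd
    rcases le_or_gt 0 d with hd0 | hd0
    · have e : (2:ℂ)^(d.toNat : ℕ) = 1 := by
        rw [← zpow_natCast (2:ℂ) d.toNat, Int.toNat_of_nonneg hd0, hd]
      have e2 : ((2^(d.toNat) : ℕ) : ℂ) = ((1 : ℕ) : ℂ) := by push_cast; exact e
      have h4 : (2:ℕ) ^ d.toNat = 1 := Nat.cast_injective e2
      have h5 : d.toNat = 0 := by
        by_contra h6
        have := Nat.one_lt_two_pow h6
        omega
      exact le_antisymm (Int.toNat_eq_zero.mp h5) hd0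
    · have hdn : (0:ℤ) ≤ -d := by omega
      have e : (2:ℂ)^((-d).toNat : ℕ) = 1 := by
        rw [← zpow_natCast (2:ℂ) (-d).toNat, Int.toNat_of_nonneg hdn, _root_.zpow_neg, hd, inv_one]
      have e2 : ((2^((-d).toNat) : ℕ) : ℂ) = ((1 : ℕ) : ℂ) := by push_cast; exact e
      have h4 : (2:ℕ) ^ (-d).toNat = 1 := Nat.cast_injective e2
      have h5 : (-d).toNat = 0 := by
        by_contra h6
        have := Nat.one_lt_two_pow h6
        omega
      have := Int.toNat_eq_zero.mp h5
      omega
  have h2 : (2:ℂ)^(z - w) = 1 := by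
    rw [zpow_sub₀ two_ne, h, div_self (zpow_ne_zero _ two_ne)]
  have := key _ h2
  omega

lemma cW (M : ℕ) (w : ℤ × ℤ) :
    (2:ℂ)^w.1 * ((2:ℂ)^M)^w.2 = (2:ℂ)^(w.1 + (M:ℤ)*w.2) := by
  rw [show ((2:ℂ)^M) = (2:ℂ)^((M:ℕ):ℤ) from (zpow_natCast 2 M).symm, ← _root_.zpow_mul,
    ← zpow_add₀ two_ne]

lemma DT2_eigen (a b : ℂ) (ha : a ≠ 0) (hb : b ≠ 0) (t : Idx) :
    trL (tE a ha) (tE b hb) (vFam t) = (a^((wtf t).1) * b^((wtf t).2)) • vFam t := by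
  funext x
  rw [trL_apply, vFam]
  show mc _ _ _ _ = _
  rw [mc_eigen (nn t) (pp t) (qq t) (pp_le t) (qq_le t) a b ha hb x,
    pow_inv_zpow a ha (pp_le t), pow_inv_zpow b hb (qq_le t)]
  rfl

def Phi (t : Idx) : MvPolynomial (Fin 2) ℂ :=
  ∑ r ∈ Finset.range (nn t + 1), monomial (dd (pp t - r) (qq t - r))
    ((if r ≤ pp t ∧ pp t ≤ nn t then ((nn t - r).choose (pp t - r) : ℂ) else 0)
      * (if r ≤ qq t then ((qq t).choose r : ℂ) else 0))

lemma eval_Phi (t : Idx) (v : Fin 2 → ℂ) :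
    eval v (Phi t) = mc (nn t) (pp t) (qq t) (uE (v 0) * lE (v 1)) := by
  rw [Phi, mc_ul _ _ _ (qq_le t) (v 0) (v 1), map_sum]
  refine Finset.sum_congr rfl fun r hr => ?_
  rw [monomial_dd]
  simp only [_root_.map_mul, map_pow, eval_C, eval_X]
  split_ifs <;> ring

lemma class_indep (w : ℤ × ℤ) : ∀ F : Finset Idx, (∀ t ∈ F, wtf t = w) →
    ∀ g : Idx → ℂ, (∑ t ∈ F, g t • vFam t) = 0 → ∀ t ∈ F, g t = 0 := by
  classical
  intro F
  induction F using Finset.strongInduction with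
  | _ F ihF =>
    intro hw g hsum t ht
    obtain ⟨t₀, ht₀, hmax⟩ := F.exists_max_image pp ⟨t, ht⟩
    have hg0 : g t₀ = 0 := by
      have hQ : (∑ t' ∈ F, g t' • Phi t') = 0 := by
        apply MvPolynomial.funext
        intro v
        rw [map_sum, map_zero]
        have hterm : ∀ t' ∈ F, eval v (g t' • Phi t')
            = g t' * mc (nn t') (pp t') (qq t') (uE (v 0) * lE (v 1)) := fun t' _ => by
          rw [smul_eval, eval_Phi]
        rw [Finset.sum_congr rfl hterm]
        have h2 := congrFun hsum (uE (v 0) * lE (v 1))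
        simp only [Finset.sum_apply, Pi.smul_apply, smul_eq_mul, Pi.zero_apply, vFam,
          mcFn] at h2
        exact h2
      have hc := congrArg (coeff (dd (pp t₀) (qq t₀))) hQ
      rw [coeff_sum, coeff_zero] at hc
      rw [Finset.sum_eq_single t₀] at hc
      · rw [coeff_smul, Phi, coeff_sum, Finset.sum_eq_single 0] at hc
        · rw [coeff_monomial, if_pos (by rw [Nat.sub_zero, Nat.sub_zero]),
            if_pos ⟨Nat.zero_le _, pp_le t₀⟩, if_pos (Nat.zero_le _), Nat.sub_zero,
            Nat.choose_zero_right, Nat.cast_one, mul_one, smul_eq_mul] at hc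
          have hch : ((nn t₀).choose (pp t₀) : ℂ) ≠ 0 := choose_cast_ne (pp_le t₀)
          rcases mul_eq_zero.mp hc with h | h
          · exact h
          · exact absurd h hch
        · intro r hr hrne
          rw [coeff_monomial]
          by_cases hdde : dd (pp t₀ - r) (qq t₀ - r) = dd (pp t₀) (qq t₀)
          · obtain ⟨h1, h2⟩ := dd_inj.mp hdde
            by_cases hr1 : r ≤ pp t₀ ∧ pp t₀ ≤ nn t₀
            · by_cases hr2 : r ≤ qq t₀
              · exact absurd (by omega : r = 0) hrne
              · rw [if_pos hdde, if_neg hr2, mul_zero]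
            · rw [if_pos hdde, if_neg hr1, zero_mul]
          · rw [if_neg hdde]
        · intro h0
          exact absurd (Finset.mem_range.mpr (by omega)) h0
      · intro t' ht' hne
        rw [coeff_smul, Phi, coeff_sum]
        rw [Finset.sum_eq_zero, smul_zero]
        intro r hr
        rw [coeff_monomial]
        by_cases hdde : dd (pp t' - r) (qq t' - r) = dd (pp t₀) (qq t₀)
        · obtain ⟨h1, h2⟩ := dd_inj.mp hdde
          by_cases hr1 : r ≤ pp t' ∧ pp t' ≤ nn t'
          · by_cases hr2 : r ≤ qq t'
            · exfalso
              have e1 : pp t' = pp t₀ + r := by omega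
              have e2 : qq t' = qq t₀ + r := by omega
              have hwt : wtf t' = wtf t₀ := (hw t' ht').trans (hw t₀ ht₀).symm
              have h3 : 2*(pp t' : ℤ) - nn t' = 2*(pp t₀ : ℤ) - nn t₀ :=
                congrArg Prod.fst hwt
              have h4 : 2*(qq t' : ℤ) - nn t' = 2*(qq t₀ : ℤ) - nn t₀ :=
                congrArg Prod.snd hwt
              have h5 : pp t' ≤ pp t₀ := hmax t' ht'
              have hr0 : r = 0 := by omega
              have hnn : nn t' = nn t₀ := by omega
              exact hne (Idx_ext hnn (by omega) (by omega))
            · rw [if_pos hdde, if_neg hr2, mul_zero]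
          · rw [if_pos hdde, if_neg hr1, zero_mul]
        · rw [if_neg hdde]
      · intro h0
        exact absurd ht₀ h0
    by_cases hne : t = t₀
    · rw [hne]; exact hg0
    · have hsub : F.erase t₀ ⊂ F := Finset.erase_ssubset ht₀
      have hE := Finset.sum_erase_add F (fun t' => g t' • vFam t') ht₀
      simp only [hg0, zero_smul, add_zero] at hE
      exact ihF (F.erase t₀) hsub (fun t' ht' => hw t' (Finset.mem_of_mem_erase ht')) g
        (hE.trans hsum) t (Finset.mem_erase.mpr ⟨hne, ht⟩)

lemma vFam_li : LinearIndependent ℂ vFam := by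
  classical
  rw [linearIndependent_iff']
  intro s g hsum i hi
  set B : ℕ := s.sup (fun t => 2 * pp t + nn t) with hB
  set M : ℕ := 2 * B + 1 with hM
  have hbne : ((2:ℂ)^M) ≠ 0 := pow_ne_zero _ two_ne
  set D := trL (tE 2 two_ne) (tE ((2:ℂ)^M) hbne) with hD
  have hbd : ∀ w ∈ s.image wtf, -(B:ℤ) ≤ w.1 ∧ w.1 ≤ (B:ℤ) := by
    intro w hw
    obtain ⟨t, ht2, rfl⟩ := Finset.mem_image.mp hw
    have hle : 2 * pp t + nn t ≤ B := Finset.le_sup (f := fun t => 2 * pp t + nn t) ht2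
    have hleZ : (2 * (pp t:ℤ) + (nn t:ℤ)) ≤ (B:ℤ) := by exact_mod_cast hle
    have hpn : (pp t : ℤ) ≤ (nn t : ℤ) := by exact_mod_cast pp_le t
    have hp0 : (0:ℤ) ≤ (pp t : ℤ) := Int.natCast_nonneg _
    constructor <;> (simp only [wtf]; omega)
  have hinj : Set.InjOn (fun w : ℤ×ℤ => (2:ℂ)^w.1 * ((2:ℂ)^M)^w.2) (s.image wtf) := by
    intro w hw w' hw' he
    have h1 := hbd w (Finset.mem_coe.mp hw)
    have h2 := hbd w' (Finset.mem_coe.mp hw')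
    simp only at he
    rw [cW, cW] at he
    have h3 := two_zpow_inj he
    rcases eq_or_ne w.2 w'.2 with h4 | h4
    · have h5 : w.1 = w'.1 := by rw [h4] at h3; linarith
      exact Prod.ext h5 h4
    · exfalso
      have h6 : (1:ℤ) ≤ |w.2 - w'.2| := Int.one_le_abs (sub_ne_zero.mpr h4)
      have h7 : (M:ℤ) * (w.2 - w'.2) = w'.1 - w.1 := by linarith
      have h8 : (M:ℤ) ≤ (M:ℤ) * |w.2 - w'.2| :=
        le_mul_of_one_le_right (by positivity) h6
      have h9 : (M:ℤ) * |w.2 - w'.2| = |w'.1 - w.1| := by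
        rw [show (M:ℤ) * |w.2 - w'.2| = |(M:ℤ)| * |w.2 - w'.2| by
            rw [abs_of_nonneg (by positivity : (0:ℤ) ≤ (M:ℤ))],
          ← abs_mul, h7]
      have h10 : |w'.1 - w.1| ≤ 2*(B:ℤ) := abs_le.mpr ⟨by omega, by omega⟩
      have hMZ : (M:ℤ) = 2*(B:ℤ)+1 := by rw [hM]; push_cast; ring
      have h11 : (M:ℤ) ≤ 2*(B:ℤ) := le_trans (h9 ▸ h8) h10
      omega
  have hU : ∀ v ∈ (⊥ : Submodule ℂ (SL2 → ℂ)), D v ∈ (⊥ : Submodule ℂ (SL2 → ℂ)) := by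
    intro v hv
    rw [Submodule.mem_bot] at hv ⊢
    rw [hv, map_zero]
  have hext := extract ⊥ D hU (fun w => (2:ℂ)^w.1 * ((2:ℂ)^M)^w.2) (s.image wtf) hinj
    (fun w => ∑ t ∈ s.filter (fun t => wtf t = w), g t • vFam t)
    (fun w hwmem => by
      rw [map_sum, Finset.smul_sum]
      refine Finset.sum_congr rfl fun t ht2 => ?_
      have hwt : wtf t = w := (Finset.mem_filter.mp ht2).2
      rw [LinearMap.map_smul, hD, DT2_eigen, hwt, smul_comm])
    (by
      rw [Submodule.mem_bot,
        Finset.sum_fiberwise_of_maps_to (fun t ht2 => Finset.mem_image_of_mem wtf ht2)]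
      exact hsum)
  have hclass := hext (wtf i) (Finset.mem_image_of_mem wtf hi)
  rw [Submodule.mem_bot] at hclass
  exact class_indep (wtf i) (s.filter (fun t => wtf t = wtf i))
    (fun t ht2 => (Finset.mem_filter.mp ht2).2) g hclass i
    (Finset.mem_filter.mpr ⟨hi, rfl⟩)

lemma Wn_eq_span_image (n : ℕ) :
    Wn n = Submodule.span ℂ (vFam '' {t : Idx | nn t = n}) := by
  rw [Wn]
  congr 1
  ext f
  constructor
  · rintro ⟨pq, rfl⟩
    exact ⟨⟨(n, pq.1, pq.2), ⟨Nat.lt_succ_iff.mp pq.1.2, Nat.lt_succ_iff.mp pq.2.2⟩⟩, rfl, rfl⟩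
  · rintro ⟨t, htn, rfl⟩
    have htn' : nn t = n := htn
    subst htn'
    exact ⟨(⟨pp t, Nat.lt_succ_iff.mpr (pp_le t)⟩, ⟨qq t, Nat.lt_succ_iff.mpr (qq_le t)⟩), rfl⟩

lemma W_indep : iSupIndep Wn := by
  intro n
  have h1 : (⨆ j, ⨆ (_ : j ≠ n), Wn j)
      = Submodule.span ℂ (vFam '' ⋃ j ∈ {j : ℕ | j ≠ n}, {t : Idx | nn t = j}) := by
    simp_rw [Wn_eq_span_image, Set.image_iUnion]
    rw [Submodule.span_iUnion₂]
    simp only [Set.mem_setOf_eq]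
  rw [Wn_eq_span_image n, h1]
  refine vFam_li.disjoint_span_image ?_
  rw [Set.disjoint_left]
  rintro t htn hun
  obtain ⟨j, hj, htj⟩ := Set.mem_iUnion₂.mp hun
  exact hj (htj.symm.trans htn)

theorem regular_functions_completely_reducible :
    ∃ (ι : Type) (W : ι → Submodule ℂ (SL2 → ℂ)),
      (∀ i, W i ≤ RegFns) ∧
      (∀ i, FiniteDimensional ℂ (W i)) ∧
      (∀ i, TranslationInvariant (W i)) ∧
      (∀ i, ∀ U : Submodule ℂ (SL2 → ℂ), U ≤ W i → TranslationInvariant U →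
        U = ⊥ ∨ U = W i) ∧
      iSupIndep W ∧ (⨆ i, W i) = RegFns := by
  exact ⟨ℕ, Wn, W_le_RegFns, W_findim, W_invariant, W_irred, W_indep, iSup_W_eq⟩

end
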